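/- For a positively a-determined module M, sdepth(M) equals the maximum of sdepth(𝒟) over all positively a-determined quasi Stanley decompositions 𝒟 of M, where sdepth of a quasi Stanley decomposition ⊕ᵢ kₐ[cᵢ,bᵢ] is min #{j : (bᵢ)ⱼ ≥ aⱼ}. -/

import Mathlib

open MvPolynomial

/-- The polynomial ring `S = k[x₁,…,xₙ]`. -/
abbrev PS (k : Type) [Field k] (n : ℕ) : Type := MvPolynomial (Fin n) k

/-- The `i`-th unit vector in `ℤⁿ`. -/
def eZ (n : ℕ) (i : Fin n) : Fin n → ℤ := fun j => if j = i then 1 else 0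

/-- Inclusion `ℕⁿ → ℤⁿ`. -/
def natDeg {n : ℕ} (d : Fin n → ℕ) : Fin n → ℤ := fun i => (d i : ℤ)

/-- Function `Fin n → ℕ` as a finitely supported function (exponent of a monomial). -/
noncomputable def toFs {n : ℕ} (d : Fin n → ℕ) : Fin n →₀ ℕ := Finsupp.equivFunOnFinite.symm d

/-- A `ℤⁿ`-grading of an `S`-module `M`: a direct sum decomposition of `M` into
`k`-subspaces compatible with multiplication by the variables. -/
structure MGrading (k : Type) [Field k] (n : ℕ) (M : Type) [AddCommGroup M]
    [Module (PS k n) M] [Module k M] [IsScalarTower k (PS k n) M] where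
  piece : (Fin n → ℤ) → Submodule k M
  indep : iSupIndep piece
  total : ⨆ d, piece d = ⊤
  smul_mem : ∀ (i : Fin n) (d : Fin n → ℤ) (m : M),
    m ∈ piece d → (X i : PS k n) • m ∈ piece (d + eZ n i)

section Core

variable {k : Type} [Field k] {n : ℕ} {M : Type} [AddCommGroup M]
  [Module (PS k n) M] [Module k M] [IsScalarTower k (PS k n) M]

/-- The `k`-subspace `m·k[Z]` spanned by the multiples of `m` by monomials in the
variables of `Z`. -/
def stanleySub (m : M) (Z : Finset (Fin n)) : Submodule k M :=
  Submodule.span k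
    {y | ∃ b : Fin n →₀ ℕ, (∀ j ∈ b.support, j ∈ Z) ∧ y = (monomial b (1 : k) : PS k n) • m}

/-- A Stanley decomposition of a `ℤⁿ`-graded module `M`: finitely many homogeneous
elements `mᵢ` and sets of variables `Zᵢ` such that each `mᵢ k[Zᵢ]` is a free Stanley
space and `M` is their direct sum as (`ℤⁿ`-graded) `k`-vector spaces. -/
structure StanleyDecomp (gr : MGrading k n M) where
  s : ℕ
  elem : Fin s → M
  deg : Fin s → (Fin n → ℤ)
  Z : Fin s → Finset (Fin n)
  homog : ∀ i, elem i ∈ gr.piece (deg i)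
  free : ∀ i, LinearIndependent k
    (fun b : {b : Fin n →₀ ℕ // ∀ j ∈ b.support, j ∈ Z i} =>
      ((monomial (b : Fin n →₀ ℕ) (1 : k) : PS k n) • elem i : M))
  indep : iSupIndep (fun i => (stanleySub (elem i) (Z i) : Submodule k M))
  total : (⨆ i, (stanleySub (elem i) (Z i) : Submodule k M)) = ⊤

/-- The Stanley depth of a `ℤⁿ`-graded module: the largest `d` such that there is a
Stanley decomposition all of whose Stanley spaces have at least `d` free variables. -/
noncomputable def sdepth (gr : MGrading k n M) : ℕ :=
  sSup {d | ∃ D : StanleyDecomp gr, ∀ i, d ≤ (D.Z i).card}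

/-- A grading is positively `a`-determined: concentrated in `ℕⁿ`, and multiplication
by `xᵢ : M_d → M_{d+eᵢ}` is bijective whenever `d i ≥ a i`. -/
structure IsPosDet (a : Fin n → ℕ) (gr : MGrading k n M) : Prop where
  nonneg : ∀ d : Fin n → ℤ, (∃ i, d i < 0) → gr.piece d = ⊥
  inj : ∀ (d : Fin n → ℕ) (i : Fin n), a i ≤ d i → ∀ m ∈ gr.piece (natDeg d),
    ∀ m' ∈ gr.piece (natDeg d),
      (X i : PS k n) • m = (X i : PS k n) • m' → m = m'
  surj : ∀ (d : Fin n → ℕ) (i : Fin n), a i ≤ d i →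
    ∀ m' ∈ gr.piece (natDeg d + eZ n i),
      ∃ m ∈ gr.piece (natDeg d), (X i : PS k n) • m = m'

/-- A Stanley decomposition is positively `a`-determined: all degrees `deg i` lie in
`[0,a]` and `{x_j : a j ≤ (deg i) j} ⊆ Z i`. -/
def StanleyDecomp.IsPosDetDecomp {gr : MGrading k n M} (a : Fin n → ℕ)
    (D : StanleyDecomp gr) : Prop :=
  ∀ i, ∃ d : Fin n → ℕ, D.deg i = natDeg d ∧ (∀ j, d j ≤ a j) ∧
    (∀ j, a j ≤ d j → j ∈ D.Z i)

/-- `#{j : a j ≤ b j}`, the cardinality of `suppᵃ(b)`. -/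
def suppCardA {n : ℕ} (a b : Fin n → ℕ) : ℕ :=
  (Finset.univ.filter (fun j => a j ≤ b j)).card

/-- `#supp(c) = #{j : c j ≥ 1}`. -/
def suppCard {n : ℕ} (c : Fin n → ℕ) : ℕ :=
  (Finset.univ.filter (fun j => 1 ≤ c j)).card

/-- `#supp(b)` for `b ∈ ℤⁿ`. -/
def suppCardZ {n : ℕ} (b : Fin n → ℤ) : ℕ :=
  (Finset.univ.filter (fun j => 1 ≤ b j)).card

/-- The set `[[c,b]]ₐ` of degrees where the interval module `kₐ[c,b]` is nonzero. -/
def intervalSet {n : ℕ} (a c b : Fin n → ℕ) : Set (Fin n → ℕ) :=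
  {d | (∀ i, c i ≤ d i) ∧ ∀ i, b i < a i → d i ≤ b i}

/-- A positively `a`-determined quasi Stanley decomposition of an (`ℕⁿ`-graded)
module `M`, encoded by the images `f i d` of the monomial basis elements `x̄^d` of the
interval modules `kₐ[cᵢ,bᵢ]` under a graded `k`-linear bijection
`⊕ᵢ kₐ[cᵢ,bᵢ] → M` satisfying `f(x̄^d) = x^{d-cᵢ}·f(x̄^{cᵢ})`. -/
structure QSDecomp (a : Fin n → ℕ) (gr : MGrading k n M) where
  s : ℕ
  c : Fin s → (Fin n → ℕ)
  b : Fin s → (Fin n → ℕ)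
  cb : ∀ i j, c i j ≤ b i j
  ba : ∀ i j, b i j ≤ a j
  f : Fin s → (Fin n → ℕ) → M
  compat : ∀ i d, d ∈ intervalSet a (c i) (b i) →
    f i d = (monomial (toFs (fun j => d j - c i j)) (1 : k) : PS k n) • f i (c i)
  mem : ∀ i d, d ∈ intervalSet a (c i) (b i) → f i d ∈ gr.piece (natDeg d)
  li : ∀ d : Fin n → ℕ, LinearIndependent k
    (fun i : {i : Fin s // d ∈ intervalSet a (c i) (b i)} => (f (i : Fin s) d : M))
  span : ∀ d : Fin n → ℕ, gr.piece (natDeg d) =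
    Submodule.span k {y | ∃ i : Fin s, d ∈ intervalSet a (c i) (b i) ∧ y = f i d}

/-- `shreg` computed via positively `a`-determined quasi Stanley decompositions. -/
noncomputable def shregA (a : Fin n → ℕ) (gr : MGrading k n M) : ℕ :=
  sInf {r | ∃ D : QSDecomp a gr, ∀ i, suppCard (D.c i) ≤ r}

/-- `shreg(M)`: minimum over all quasi Stanley decompositions (for all `a`) of the
maximal support-cardinality of the bottom degrees `cᵢ`. -/
noncomputable def shreg (gr : MGrading k n M) : ℕ :=
  sInf {r | ∃ a : Fin n → ℕ, ∃ D : QSDecomp a gr, ∀ i, suppCard (D.c i) ≤ r}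

end Core

/-- Depth of an `S`-module with respect to the ideal `(x₁,…,xₙ)`: the supremum of
lengths of regular sequences consisting of elements of `(x₁,…,xₙ)`. -/
noncomputable def mdepth (k : Type) [Field k] (n : ℕ) (M : Type) [AddCommGroup M]
    [Module (PS k n) M] : ℕ :=
  sSup {d | ∃ rs : List (PS k n), rs.length = d ∧
    (∀ r ∈ rs, r ∈ Ideal.span (Set.range (X : Fin n → PS k n))) ∧
    RingTheory.Sequence.IsRegular M rs}

/-- Krull dimension of an `S`-module, i.e. the Krull dimension of `S/ann(M)`. -/
noncomputable def mdim (k : Type) [Field k] (n : ℕ) (M : Type) [AddCommGroup M]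
    [Module (PS k n) M] : WithBot (WithTop ℕ) :=
  ringKrullDim (PS k n ⧸ Module.annihilator (PS k n) M)

/-- An `S`-module is Cohen–Macaulay if its depth equals its Krull dimension. -/
def IsCMmod (k : Type) [Field k] (n : ℕ) (M : Type) [AddCommGroup M]
    [Module (PS k n) M] : Prop :=
  (mdepth k n M : WithBot (WithTop ℕ)) = mdim k n M

/-- The defining ideal of the interval module `kₐ[c,b]`:
generated by `xᵢ^{bᵢ-cᵢ+1}` for the `i` with `bᵢ < aᵢ`. -/
noncomputable def intervalIdeal (k : Type) [Field k] {n : ℕ} (a c b : Fin n → ℕ) : Ideal (PS k n) :=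
  Ideal.span {p | ∃ i, b i < a i ∧ p = (X i : PS k n) ^ (b i - c i + 1)}

/-- The interval module `kₐ[c,b] = x^c · S/(xᵢ^{bᵢ+1} : bᵢ < aᵢ)`, realized (up to the
degree shift by `c`, which is recorded in the grading `intervalPiece`) as the quotient
`S/(xᵢ^{bᵢ-cᵢ+1} : bᵢ < aᵢ)`. -/
abbrev IntervalMod (k : Type) [Field k] {n : ℕ} (a c b : Fin n → ℕ) : Type :=
  PS k n ⧸ intervalIdeal k a c b

/-- The graded piece of `kₐ[c,b]` in degree `d`: spanned by (the image of) the
monomial `x^{d-c}` when `d ⪰ c`, and `0` otherwise. -/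
noncomputable def intervalPiece (k : Type) [Field k] {n : ℕ} (a c b : Fin n → ℕ)
    (d : Fin n → ℤ) : Submodule k (IntervalMod k a c b) :=
  Submodule.span k {y | ∃ e : Fin n →₀ ℕ, (∀ i, d i = c i + e i) ∧
    y = Ideal.Quotient.mk (intervalIdeal k a c b) (monomial e (1 : k))}

/-- `d - eᵢ` in `ℕⁿ`. -/
def subE {n : ℕ} (d : Fin n → ℕ) (i : Fin n) : Fin n → ℕ :=
  fun j => if j = i then d j - 1 else d j

/-- `N` is (isomorphic to) the Alexander dual `𝒜ₐ(M)` of `M`:  there is a family of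
perfect `k`-bilinear pairings `N_d × M_{a-d} → k` (for `d ∈ [0,a]`) intertwining
multiplication by `xᵢ` on the two sides. -/
structure IsAlexDual {k : Type} [Field k] {n : ℕ} {M N : Type}
    [AddCommGroup M] [Module (PS k n) M] [Module k M] [IsScalarTower k (PS k n) M]
    [AddCommGroup N] [Module (PS k n) N] [Module k N] [IsScalarTower k (PS k n) N]
    (a : Fin n → ℕ) (grM : MGrading k n M) (grN : MGrading k n N) : Prop where
  exists_pairing : ∃ B : (Fin n → ℕ) → N → M → k,
    (∀ d y y' m, B d (y + y') m = B d y m + B d y' m) ∧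
    (∀ d (r : k) y m, B d (r • y) m = r * B d y m) ∧
    (∀ d y m m', B d y (m + m') = B d y m + B d y m') ∧
    (∀ d (r : k) y m, B d y (r • m) = r * B d y m) ∧
    (∀ d : Fin n → ℕ, (∀ j, d j ≤ a j) →
      (∀ y ∈ grN.piece (natDeg d),
        (∀ m ∈ grM.piece (natDeg (fun j => a j - d j)), B d y m = 0) → y = 0) ∧
      (∀ m ∈ grM.piece (natDeg (fun j => a j - d j)),
        (∀ y ∈ grN.piece (natDeg d), B d y m = 0) → m = 0)) ∧
    (∀ (d : Fin n → ℕ) (i : Fin n), (∀ j, d j ≤ a j) → 1 ≤ d i →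
      ∀ y ∈ grN.piece (natDeg (subE d i)),
        ∀ m ∈ grM.piece (natDeg (fun j => a j - d j)),
          B d ((X i : PS k n) • y) m = B (subE d i) y ((X i : PS k n) • m))

section Skel

variable {k : Type} [Field k] {n : ℕ} {M : Type} [AddCommGroup M]
  [Module (PS k n) M] [Module k M] [IsScalarTower k (PS k n) M]

/-- `M^{≥l}` (i.e. `M^{>l-1}`): the `S`-submodule of `M` generated by all graded
components `M_d` with `#suppᵃ(d) ≥ l`. -/
noncomputable def skelSubGe (a : Fin n → ℕ) (gr : MGrading k n M) (l : ℕ) : Submodule (PS k n) M :=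
  Submodule.span (PS k n)
    {m : M | ∃ d : Fin n → ℕ, l ≤ suppCardA a d ∧ m ∈ gr.piece (natDeg d)}

/-- `M^{>l}`: the `S`-submodule of `M` generated by all graded components `M_d` with
`#suppᵃ(d) > l`. -/
noncomputable def skelSubGt (a : Fin n → ℕ) (gr : MGrading k n M) (l : ℕ) : Submodule (PS k n) M :=
  skelSubGe a gr (l + 1)

end Skel

/-- The monomial `x^d`. -/
noncomputable def mono (k : Type) [Field k] {n : ℕ} (d : Fin n → ℕ) : PS k n :=
  monomial (toFs d) (1 : k)

/-- The sliding operation `a ◁ b`. -/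
def slide {n : ℕ} (a b : Fin n → ℕ) : Fin n → ℕ :=
  fun i => if a i = 0 then 0 else a i + b i

/-- The irreducible monomial ideal `𝔪^a = (xᵢ^{aᵢ} : aᵢ > 0)`. -/
noncomputable def irrIdeal (k : Type) [Field k] {n : ℕ} (a : Fin n → ℕ) : Ideal (PS k n) :=
  Ideal.span {p | ∃ i, 0 < a i ∧ p = (X i : PS k n) ^ (a i)}

/-- The degree-`d` piece of the natural monomial grading of `S/I` for a monomial
ideal `I`: spanned by the image of the monomial of degree `d`. -/
noncomputable def quotMonPiece (k : Type) [Field k] {n : ℕ} (I : Ideal (PS k n))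
    (d : Fin n → ℤ) : Submodule k (PS k n ⧸ I) :=
  Submodule.span k {y | ∃ e : Fin n →₀ ℕ, (∀ i, d i = e i) ∧
    y = Ideal.Quotient.mk I (monomial e (1 : k))}

/-- The degree-`d` piece of the natural monomial grading of a monomial ideal `I`
(regarded as an `S`-module): spanned by the monomial of degree `d` if it lies in `I`. -/
noncomputable def idealMonPiece (k : Type) [Field k] {n : ℕ} (I : Ideal (PS k n))
    (d : Fin n → ℤ) : Submodule k ↥I :=
  Submodule.span k {y : ↥I | ∃ e : Fin n →₀ ℕ, (∀ i, d i = e i) ∧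
    (y : PS k n) = monomial e (1 : k)}

/-! ### Auxiliary machinery -/

section Aux
set_option linter.unusedSectionVars false

variable {k : Type} [Field k] {n : ℕ} {M : Type} [AddCommGroup M]
  [Module (PS k n) M] [Module k M] [IsScalarTower k (PS k n) M]

lemma toFs_apply (d : Fin n → ℕ) (j : Fin n) : toFs d j = d j := rfl

lemma toFs_coe (d : Fin n → ℕ) : ⇑(toFs d) = d := rfl

lemma toFs_inj {d d' : Fin n → ℕ} (h : toFs d = toFs d') : d = d' := by
  exact Finsupp.equivFunOnFinite.symm.injective h

lemma mono_smul_mono (u v : Fin n → ℕ) (m : M) :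
    (monomial (toFs u) (1:k) : PS k n) • ((monomial (toFs v) (1:k) : PS k n) • m)
      = (monomial (toFs (fun j => u j + v j)) (1:k) : PS k n) • m := by
  have h1 : toFs u + toFs v = toFs (fun j => u j + v j) := by
    ext j; simp [toFs_apply, Finsupp.add_apply]
  rw [smul_smul, monomial_mul, one_mul, h1]

lemma mono_zero_smul (m : M) :
    (monomial (toFs (fun _ => 0)) (1:k) : PS k n) • m = m := by
  have : toFs (fun _ : Fin n => (0:ℕ)) = 0 := by ext j; rfl
  rw [this, monomial_zero', C_1, one_smul]

/-- Scalar multiplication by a fixed polynomial as a `k`-linear map. -/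
noncomputable def smulLM (p : PS k n) : M →ₗ[k] M where
  toFun m := p • m
  map_add' := smul_add p
  map_smul' c m := by
    simp only [RingHom.id_apply]
    rw [← IsScalarTower.algebraMap_smul (PS k n) c m,
      ← IsScalarTower.algebraMap_smul (PS k n) c (p • m), smul_smul, smul_smul, mul_comm]

lemma smulLM_apply (p : PS k n) (m : M) : smulLM (M := M) p m = p • m := rfl

variable (gr : MGrading k n M)

lemma mem_piece_mono_smul (w : Fin n → ℕ) :
    ∀ {g : Fin n → ℤ} {m : M}, m ∈ gr.piece g →
      (monomial (toFs w) (1:k) : PS k n) • m ∈ gr.piece (fun j => g j + w j) := by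
  generalize hN : (∑ j, w j) = N
  induction N generalizing w with
  | zero =>
    intro g m hm
    have hw : w = fun _ => 0 := by
      funext j
      exact (Finset.sum_eq_zero_iff.mp hN) j (Finset.mem_univ j)
    subst hw
    rw [mono_zero_smul]
    convert hm using 2
    funext j; simp
  | succ N ih =>
    intro g m hm
    have hex : ∃ i, 0 < w i := by
      by_contra hc
      push_neg at hc
      have : (∑ j, w j) = 0 := Finset.sum_eq_zero (fun j _ => Nat.le_zero.mp (hc j))
      omega
    obtain ⟨i, hi⟩ := hex
    have hsplit : toFs w = Finsupp.single i 1 + toFs (subE w i) := by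
      ext j
      by_cases hj : j = i
      · subst hj; simp [toFs_apply, subE]; omega
      · simp [toFs_apply, subE, hj, Finsupp.single_apply, Ne.symm]
    have hmono : (monomial (toFs w) (1:k) : PS k n)
        = (X i : PS k n) * monomial (toFs (subE w i)) (1:k) := by
      rw [X, monomial_mul, one_mul, hsplit]
    have hsum : (∑ j, subE w i j) = N := by
      have h1 : (∑ j, w j) = (∑ j, subE w i j) + 1 := by
        rw [← Finset.sum_add_sum_compl {i}, ← Finset.sum_add_sum_compl {i} (f := fun j => subE w i j)]
        have e1 : (∑ j ∈ {i}, w j) = (∑ j ∈ {i}, subE w i j) + 1 := by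
          simp [subE]; omega
        have e2 : (∑ j ∈ {i}ᶜ, w j) = (∑ j ∈ {i}ᶜ, subE w i j) := by
          apply Finset.sum_congr rfl
          intro j hj
          simp at hj
          simp [subE, hj]
        omega
      omega
    have hmem := ih (subE w i) hsum hm
    have := gr.smul_mem i _ _ hmem
    rw [hmono, mul_smul]
    convert this using 2
    funext j
    by_cases hj : j = i
    · subst hj; simp [subE, eZ]; omega
    · simp [subE, eZ, hj]

lemma sum_subE {w : Fin n → ℕ} {i : Fin n} (hi : 0 < w i) :
    (∑ j, subE w i j) + 1 = ∑ j, w j := by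
  rw [← Finset.sum_add_sum_compl {i} w, ← Finset.sum_add_sum_compl {i} (fun j => subE w i j)]
  have e1 : (∑ j ∈ {i}, w j) = (∑ j ∈ {i}, subE w i j) + 1 := by
    simp [subE]; omega
  have e2 : (∑ j ∈ {i}ᶜ, w j) = (∑ j ∈ {i}ᶜ, subE w i j) := by
    apply Finset.sum_congr rfl
    intro j hj
    simp at hj
    simp [subE, hj]
  omega

lemma mono_eq_X_mul {i : Fin n} {w : Fin n → ℕ} (hi : 0 < w i) :
    (monomial (toFs w) (1:k) : PS k n) = (X i : PS k n) * monomial (toFs (subE w i)) (1:k) := by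
  have hsplit : toFs w = Finsupp.single i 1 + toFs (subE w i) := by
    ext j
    by_cases hj : j = i
    · subst hj; simp [toFs_apply, subE]; omega
    · simp [toFs_apply, subE, hj, Finsupp.single_apply, Ne.symm]
  rw [X, monomial_mul, one_mul, hsplit]

lemma posdet_iter {a : Fin n → ℕ} {gr : MGrading k n M} (h : IsPosDet a gr) :
    ∀ (w g : Fin n → ℕ), (∀ j, 0 < w j → a j ≤ g j) →
      (∀ m ∈ gr.piece (natDeg g), ∀ m' ∈ gr.piece (natDeg g),
        (monomial (toFs w) (1:k) : PS k n) • m = (monomial (toFs w) (1:k) : PS k n) • m' → m = m') ∧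
      (∀ y ∈ gr.piece (natDeg (fun j => g j + w j)), ∃ m ∈ gr.piece (natDeg g),
        (monomial (toFs w) (1:k) : PS k n) • m = y) := by
  suffices H : ∀ (N : ℕ) (w g : Fin n → ℕ), (∑ j, w j) = N → (∀ j, 0 < w j → a j ≤ g j) →
      (∀ m ∈ gr.piece (natDeg g), ∀ m' ∈ gr.piece (natDeg g),
        (monomial (toFs w) (1:k) : PS k n) • m = (monomial (toFs w) (1:k) : PS k n) • m' → m = m') ∧
      (∀ y ∈ gr.piece (natDeg (fun j => g j + w j)), ∃ m ∈ gr.piece (natDeg g),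
        (monomial (toFs w) (1:k) : PS k n) • m = y) by
    intro w g hw; exact H _ w g rfl hw
  intro N
  induction N with
  | zero =>
    intro w g hN hw
    have hw0 : w = fun _ => 0 := by
      funext j
      exact (Finset.sum_eq_zero_iff.mp hN) j (Finset.mem_univ j)
    subst hw0
    constructor
    · intro m hm m' hm' he
      rwa [mono_zero_smul, mono_zero_smul] at he
    · intro y hy
      refine ⟨y, ?_, mono_zero_smul y⟩
      have hd : natDeg (fun j => g j + (fun _ => (0:ℕ)) j) = natDeg g := by
        funext j; simp [natDeg]
      rwa [hd] at hy
  | succ N ih =>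
    intro w g hN hw
    obtain ⟨i, hi⟩ : ∃ i, 0 < w i := by
      by_contra hc; push_neg at hc
      have h0 : (∑ j, w j) = 0 := Finset.sum_eq_zero fun j _ => Nat.le_zero.mp (hc j)
      omega
    set w' := subE w i with hw'
    set gi : Fin n → ℕ := fun j => if j = i then g j + 1 else g j with hgi
    have hsum : (∑ j, w' j) = N := by
      have h2 := sum_subE (w := w) (i := i) hi
      rw [← hw'] at h2
      omega
    have hcond : ∀ j, 0 < w' j → a j ≤ gi j := by
      intro j hj
      rw [hw'] at hj
      have hwj : 0 < w j := by
        by_cases hji : j = i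
        · subst hji; simp [subE] at hj; omega
        · simpa [subE, hji] using hj
      have haj := hw j hwj
      by_cases hji : j = i
      · subst hji; simp [hgi]; omega
      · simp [hgi, hji]; omega
    have hdeg1 : natDeg gi = natDeg g + eZ n i := by
      funext j; by_cases hji : j = i <;> simp [natDeg, hgi, eZ, hji]
    have hdeg2 : (fun j => gi j + w' j) = (fun j => g j + w j) := by
      funext j
      by_cases hji : j = i
      · subst hji; simp [hgi, hw', subE]; omega
      · simp [hgi, hw', subE, hji]
    obtain ⟨ihinj, ihsurj⟩ := ih w' gi hsum hcond
    have hmono := mono_eq_X_mul (k := k) (i := i) (w := w) hi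
    constructor
    · intro m hm m' hm' he
      have hXm : (X i : PS k n) • m ∈ gr.piece (natDeg gi) := by
        rw [hdeg1]; exact gr.smul_mem i _ m hm
      have hXm' : (X i : PS k n) • m' ∈ gr.piece (natDeg gi) := by
        rw [hdeg1]; exact gr.smul_mem i _ m' hm'
      have he2 : (monomial (toFs w') (1:k) : PS k n) • ((X i : PS k n) • m)
          = (monomial (toFs w') (1:k) : PS k n) • ((X i : PS k n) • m') := by
        rw [smul_smul, smul_smul, mul_comm, ← hmono]
        exact he
      exact h.inj g i (hw i hi) m hm m' hm' (ihinj _ hXm _ hXm' he2)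
    · intro y hy
      have hy2 : y ∈ gr.piece (natDeg (fun j => gi j + w' j)) := by rw [hdeg2]; exact hy
      obtain ⟨z, hz, hzy⟩ := ihsurj y hy2
      rw [hdeg1] at hz
      obtain ⟨m, hm, hXm⟩ := h.surj g i (hw i hi) z hz
      refine ⟨m, hm, ?_⟩
      rw [hmono, mul_comm, mul_smul, hXm]
      exact hzy

lemma grInternal : DirectSum.IsInternal gr.piece :=
  (DirectSum.isInternal_submodule_iff_iSupIndep_and_iSup_eq_top _).mpr ⟨gr.indep, gr.total⟩

/-- Projection onto the degree-`e` component. -/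
noncomputable def grProj (e : Fin n → ℤ) : M →ₗ[k] M :=
  (gr.piece e).subtype ∘ₗ
    (DirectSum.component k (Fin n → ℤ) (fun g => (gr.piece g : Submodule k M)) e) ∘ₗ
    (LinearEquiv.ofBijective (DirectSum.coeLinearMap gr.piece) (grInternal gr)).symm.toLinearMap

lemma grProj_of_mem {e : Fin n → ℤ} {x : M} (hx : x ∈ gr.piece e) : grProj gr e x = x :=
  congrArg Subtype.val ((grInternal gr).ofBijective_coeLinearMap_of_mem hx)

lemma grProj_of_mem_ne {e g : Fin n → ℤ} (hne : g ≠ e) {x : M} (hx : x ∈ gr.piece g) :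
    grProj gr e x = 0 :=
  congrArg Subtype.val ((grInternal gr).ofBijective_coeLinearMap_of_mem_ne hne hx)

lemma grProj_eq_zero_of_forall {x : M} (hx : ∀ e, grProj gr e x = 0) : x = 0 := by
  set E := LinearEquiv.ofBijective (DirectSum.coeLinearMap gr.piece) (grInternal gr) with hE
  have h0 : E.symm x = 0 := DFinsupp.ext fun e => Subtype.ext (hx e)
  have h2 := E.apply_symm_apply x
  rw [h0] at h2
  rw [← h2]
  exact E.map_zero

lemma grProj_span_le {e : Fin n → ℤ} {S T : Set M}
    (hST : ∀ y ∈ S, ∃ g, y ∈ gr.piece g ∧ (g = e → y ∈ T)) :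
    ∀ {x : M}, x ∈ Submodule.span k S → grProj gr e x ∈ Submodule.span k T := by
  intro x hx
  induction hx using Submodule.span_induction with
  | mem y hy =>
    obtain ⟨g, hg, hT⟩ := hST y hy
    by_cases hge : g = e
    · subst hge
      rw [grProj_of_mem gr hg]
      exact Submodule.subset_span (hT rfl)
    · rw [grProj_of_mem_ne gr hge hg]
      exact Submodule.zero_mem _
  | zero => rw [map_zero]; exact Submodule.zero_mem _
  | add y z hy hz ihy ihz => rw [map_add]; exact Submodule.add_mem _ ihy ihz
  | smul c y hy ihy => rw [map_smul]; exact Submodule.smul_mem _ c ihy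

/-- The set of degrees covered by the Stanley space with bottom degree `c` and
free variables `Z`. -/
def stSet (c : Fin n → ℕ) (Z : Finset (Fin n)) : Set (Fin n → ℕ) :=
  {d | (∀ j, c j ≤ d j) ∧ ∀ j, j ∉ Z → d j = c j}

/-- `x^{d-c} • m`. -/
noncomputable def vvec (c : Fin n → ℕ) (m : M) (d : Fin n → ℕ) : M :=
  (monomial (toFs (fun j => d j - c j)) (1:k) : PS k n) • m

lemma toFs_coe_fs (b : Fin n →₀ ℕ) : toFs ⇑b = b :=
  Finsupp.equivFunOnFinite.symm_apply_apply b

lemma vvec_mem {c : Fin n → ℕ} {m : M} (hm : m ∈ gr.piece (natDeg c))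
    {d : Fin n → ℕ} (hd : ∀ j, c j ≤ d j) : vvec (k := k) c m d ∈ gr.piece (natDeg d) := by
  have h2 := mem_piece_mono_smul gr (fun j => d j - c j) hm
  have : vvec (k := k) c m d ∈ gr.piece (fun j => natDeg c j + ((fun j => d j - c j) j : ℤ)) := h2
  convert this using 2
  funext j
  simp only [natDeg]
  have := hd j
  omega

lemma vvec_comp {c e d : Fin n → ℕ} (m : M) (hce : ∀ j, c j ≤ e j) (hed : ∀ j, e j ≤ d j) :
    vvec (k := k) e (vvec (k := k) c m e) d = vvec (k := k) c m d := by
  unfold vvec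
  rw [mono_smul_mono]
  have h1 : (fun j => (d j - e j) + (e j - c j)) = (fun j => d j - c j) := by
    funext j; have := hce j; have := hed j; omega
  rw [h1]

lemma vvec_self (c : Fin n → ℕ) (m : M) : vvec (k := k) c m c = m := by
  unfold vvec
  have h1 : (fun j => c j - c j) = (fun _ : Fin n => (0:ℕ)) := by funext j; omega
  rw [h1, mono_zero_smul]

lemma stanley_elem_ne_zero (D : StanleyDecomp gr) (i : Fin D.s) : D.elem i ≠ 0 := by
  have h0 := (D.free i).ne_zero ⟨0, by simp⟩
  simpa [monomial_zero', C_1] using h0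

lemma stanley_deg_nonneg {a : Fin n → ℕ} (h : IsPosDet a gr) (D : StanleyDecomp gr)
    (i : Fin D.s) (j : Fin n) : 0 ≤ D.deg i j := by
  by_contra hc
  push_neg at hc
  have hbot := h.nonneg (D.deg i) ⟨j, hc⟩
  have h2 := D.homog i
  rw [hbot] at h2
  exact stanley_elem_ne_zero gr D i (by simpa using h2)

/-- From a Stanley decomposition, obtain pointwise (degreewise) basis data. -/
lemma stanley_pointwise {a : Fin n → ℕ} (h : IsPosDet a gr) (D : StanleyDecomp gr) :
    ∃ (c : Fin D.s → (Fin n → ℕ)) (m : Fin D.s → M),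
      (∀ i, m i ∈ gr.piece (natDeg (c i))) ∧
      (∀ d : Fin n → ℕ, LinearIndependent k
        (fun i : {i : Fin D.s // d ∈ stSet (c i) (D.Z i)} => vvec (k := k) (c i.1) (m i.1) d)) ∧
      (∀ d : Fin n → ℕ, gr.piece (natDeg d) =
        Submodule.span k {y | ∃ i, d ∈ stSet (c i) (D.Z i) ∧ y = vvec (k := k) (c i) (m i) d}) := by
  classical
  set c : Fin D.s → (Fin n → ℕ) := fun i j => (D.deg i j).toNat with hc
  have hdeg : ∀ i, natDeg (c i) = D.deg i := by
    intro i; funext j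
    simp [natDeg, hc, Int.toNat_of_nonneg (stanley_deg_nonneg gr h D i j)]
  have hsupp : ∀ (i : Fin D.s) (d : Fin n → ℕ), d ∈ stSet (c i) (D.Z i) →
      ∀ j ∈ (toFs (fun j => d j - c i j)).support, j ∈ D.Z i := by
    intro i d hd j hj
    by_contra hjZ
    have h1 := hd.2 j hjZ
    rw [Finsupp.mem_support_iff] at hj
    have h2 : d j - c i j ≠ 0 := hj
    omega
  refine ⟨c, D.elem, ?_, ?_, ?_⟩
  · intro i; rw [hdeg i]; exact D.homog i
  · intro d
    apply iSupIndep.linearIndependent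
      (fun i : {i : Fin D.s // d ∈ stSet (c i) (D.Z i)} => stanleySub (D.elem i.1) (D.Z i.1))
    · exact D.indep.comp Subtype.val_injective
    · intro i
      apply Submodule.subset_span
      exact ⟨toFs (fun j => d j - c i.1 j), hsupp i.1 d i.2, rfl⟩
    · intro i
      have h0 := (D.free i.1).ne_zero ⟨toFs (fun j => d j - c i.1 j), hsupp i.1 d i.2⟩
      simpa only [vvec] using h0
  · intro d
    apply le_antisymm
    · intro x hx
      have hx2 : x ∈ (⊤ : Submodule k M) := trivial
      rw [← D.total] at hx2
      have hsup : (⨆ i, stanleySub (D.elem i) (D.Z i)) =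
          Submodule.span k (⋃ i, {y | ∃ b : Fin n →₀ ℕ, (∀ j ∈ b.support, j ∈ D.Z i) ∧
            y = (monomial b (1:k) : PS k n) • D.elem i}) := by
        rw [Submodule.span_iUnion]; rfl
      rw [hsup] at hx2
      have hproj := grProj_span_le gr (e := natDeg d)
        (T := {y | ∃ i, d ∈ stSet (c i) (D.Z i) ∧ y = vvec (k := k) (c i) (D.elem i) d}) ?_ hx2
      · rwa [grProj_of_mem gr hx] at hproj
      · rintro y hy
        simp only [Set.mem_iUnion, Set.mem_setOf_eq] at hy
        obtain ⟨i, b, hb, rfl⟩ := hy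
        refine ⟨fun j => D.deg i j + (b j : ℤ), ?_, ?_⟩
        · have h2 := mem_piece_mono_smul gr (fun j => b j) (D.homog i)
          rw [toFs_coe_fs] at h2
          exact h2
        · intro hge
          have hcomp : ∀ j, c i j + b j = d j := by
            intro j
            have h3 := congrFun hge j
            simp only [natDeg] at h3
            have h4 : (0:ℤ) ≤ D.deg i j := stanley_deg_nonneg gr h D i j
            have h5 : (c i j : ℤ) = D.deg i j := by
              simp [hc, Int.toNat_of_nonneg h4]
            omega
          have hdS : d ∈ stSet (c i) (D.Z i) := by
            constructor
            · intro j; have := hcomp j; omega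
            · intro j hjZ
              have hbj : b j = 0 := by
                by_contra hbj
                exact hjZ (hb j (Finsupp.mem_support_iff.mpr hbj))
              have := hcomp j; omega
          refine ⟨i, hdS, ?_⟩
          have hbeq : b = toFs (fun j => d j - c i j) := by
            apply Finsupp.equivFunOnFinite.injective
            funext j
            have h6 : b j = d j - c i j := by have := hcomp j; omega
            simpa [toFs] using h6
          rw [vvec, ← hbeq]
    · rw [Submodule.span_le]
      rintro y ⟨i, hdS, rfl⟩
      exact vvec_mem gr (by rw [hdeg i]; exact D.homog i) hdS.1

lemma mono_smul_mem_piece {c : Fin n → ℕ} {m : M} (hm : m ∈ gr.piece (natDeg c))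
    (b : Fin n →₀ ℕ) :
    (monomial b (1:k) : PS k n) • m ∈ gr.piece (natDeg (fun j => c j + b j)) := by
  have h2 := mem_piece_mono_smul gr (fun j => b j) hm
  rw [toFs_coe_fs] at h2
  convert h2 using 2
  funext j; simp [natDeg]

lemma degree_match {c : Fin n → ℕ} {Z : Finset (Fin n)} {b : Fin n →₀ ℕ}
    (hb : ∀ j ∈ b.support, j ∈ Z) {d : Fin n → ℕ}
    (hge : natDeg (fun j => c j + b j) = natDeg d) :
    d ∈ stSet c Z ∧ b = toFs (fun j => d j - c j) := by
  have hcomp : ∀ j, c j + b j = d j := by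
    intro j
    have h3 := congrFun hge j
    simp only [natDeg] at h3
    omega
  refine ⟨⟨fun j => by have := hcomp j; omega, fun j hjZ => ?_⟩, ?_⟩
  · have hbj : b j = 0 := by
      by_contra hbj
      exact hjZ (hb j (Finsupp.mem_support_iff.mpr hbj))
    have := hcomp j; omega
  · apply Finsupp.equivFunOnFinite.injective
    funext j
    have h6 : b j = d j - c j := by have := hcomp j; omega
    simpa [toFs] using h6

/-- From pointwise (degreewise) basis data, build a Stanley decomposition. -/
lemma pointwise_to_stanley {a : Fin n → ℕ} (h : IsPosDet a gr) {ι : Type} [Fintype ι]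
    (c : ι → (Fin n → ℕ)) (Z : ι → Finset (Fin n)) (m : ι → M)
    (hhom : ∀ i, m i ∈ gr.piece (natDeg (c i)))
    (hli : ∀ d : Fin n → ℕ, LinearIndependent k
      (fun i : {i : ι // d ∈ stSet (c i) (Z i)} => vvec (k := k) (c i.1) (m i.1) d))
    (hspan : ∀ d : Fin n → ℕ, gr.piece (natDeg d) =
      Submodule.span k {y | ∃ i, d ∈ stSet (c i) (Z i) ∧ y = vvec (k := k) (c i) (m i) d}) :
    ∃ D : StanleyDecomp gr, ∀ i' : Fin D.s, ∃ i : ι, D.Z i' = Z i := by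
  classical
  obtain ⟨E⟩ : Nonempty (ι ≃ Fin (Fintype.card ι)) := ⟨Fintype.equivFin ι⟩
  set G : ι → Set M := fun i =>
    {y | ∃ b : Fin n →₀ ℕ, (∀ j ∈ b.support, j ∈ Z i) ∧ y = (monomial b (1:k) : PS k n) • m i}
    with hG
  have hGsub : ∀ i, stanleySub (m i) (Z i) = Submodule.span k (G i) := fun i => rfl
  -- generators are in the target sets when their degree matches
  have hkey : ∀ (e : Fin n → ℤ) (i : ι), ∀ y ∈ G i,
      ∃ g, y ∈ gr.piece g ∧
        (g = e → ∃ (d : Fin n → ℕ) (hd : d ∈ stSet (c i) (Z i)),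
          natDeg d = e ∧ y = vvec (k := k) (c i) (m i) d) := by
    intro e i y hy
    obtain ⟨b, hb, rfl⟩ := hy
    refine ⟨natDeg (fun j => c i j + b j), mono_smul_mem_piece gr (hhom i) b, ?_⟩
    intro hge
    by_cases hpos : ∀ j, 0 ≤ e j
    · set d : Fin n → ℕ := fun j => (e j).toNat with hd
      have hnd : natDeg d = e := by
        funext j; simp [natDeg, hd, Int.toNat_of_nonneg (hpos j)]
      obtain ⟨hdS, hbeq⟩ := degree_match hb (d := d) (by rw [hnd]; exact hge)
      exact ⟨d, hdS, hnd, by rw [vvec, ← hbeq]⟩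
    · exfalso
      push_neg at hpos
      obtain ⟨j, hj⟩ := hpos
      have := congrFun hge j
      simp only [natDeg] at this
      omega
  -- vectors in degree d belong to the Stanley space
  have hvG : ∀ (i : ι) (d : Fin n → ℕ), d ∈ stSet (c i) (Z i) →
      vvec (k := k) (c i) (m i) d ∈ G i := by
    intro i d hd
    refine ⟨toFs (fun j => d j - c i j), ?_, rfl⟩
    intro j hj
    by_contra hjZ
    have h1 := hd.2 j hjZ
    rw [Finsupp.mem_support_iff] at hj
    have h2 : d j - c i j ≠ 0 := hj
    omega
  refine ⟨⟨Fintype.card ι, fun i' => m (E.symm i'), fun i' => natDeg (c (E.symm i')),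
    fun i' => Z (E.symm i'), fun i' => hhom _, ?_, ?_, ?_⟩, fun i' => ⟨E.symm i', rfl⟩⟩
  -- free
  · intro i'
    show LinearIndependent k (fun b : {b : Fin n →₀ ℕ // ∀ j ∈ b.support, j ∈ Z (E.symm i')} =>
      (monomial (b : Fin n →₀ ℕ) (1:k) : PS k n) • m (E.symm i'))
    generalize E.symm i' = i0
    apply iSupIndep.linearIndependent
      (fun b : {b : Fin n →₀ ℕ // ∀ j ∈ b.support, j ∈ Z i0} =>
        gr.piece (natDeg (fun j => c i0 j + b.1 j)))
    · apply gr.indep.comp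
      intro b b' hbb
      have : ∀ j, c i0 j + b.1 j = c i0 j + b'.1 j := by
        intro j
        have := congrFun hbb j
        simp only [natDeg] at this
        omega
      apply Subtype.ext
      ext j
      have := this j; omega
    · intro b
      show (monomial b.1 (1:k) : PS k n) • m i0 ∈ _
      exact mono_smul_mem_piece gr (hhom i0) b.1
    · intro b
      show (monomial b.1 (1:k) : PS k n) • m i0 ≠ 0
      have hdS : (fun j => c i0 j + b.1 j) ∈ stSet (c i0) (Z i0) := by
        refine ⟨fun j => ?_, fun j hjZ => ?_⟩
        · show c i0 j ≤ c i0 j + b.1 j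
          omega
        have hbj : b.1 j = 0 := by
          by_contra hbj
          exact hjZ (b.2 j (Finsupp.mem_support_iff.mpr hbj))
        show c i0 j + b.1 j = c i0 j
        omega
      have hexp : (b.1 : Fin n →₀ ℕ)
          = toFs (fun j => (fun j => c i0 j + b.1 j) j - c i0 j) := by
        apply Finsupp.equivFunOnFinite.injective
        funext j
        have h7 : b.1 j = (c i0 j + b.1 j) - c i0 j := by omega
        simpa [toFs] using h7
      have hvec : (monomial b.1 (1:k) : PS k n) • m i0
          = vvec (k := k) (c i0) (m i0) (fun j => c i0 j + b.1 j) :=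
        congrArg (fun q : Fin n →₀ ℕ => (monomial q (1:k) : PS k n) • m i0) hexp
      rw [hvec]
      have h9 := (hli (fun j => c i0 j + b.1 j)).ne_zero ⟨i0, hdS⟩
      simp only [] at h9
      exact h9
  -- indep
  · intro i'
    show Disjoint (stanleySub (m (E.symm i')) (Z (E.symm i')))
      (⨆ j, ⨆ (_ : j ≠ i'), stanleySub (m (E.symm j)) (Z (E.symm j)))
    generalize hgen : E.symm i' = i0
    rw [Submodule.disjoint_def]
    intro x hx1 hx2
    have hiSup : (⨆ j, ⨆ (_ : j ≠ i'), stanleySub (m (E.symm j)) (Z (E.symm j)))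
        = Submodule.span k (⋃ j : {j : Fin (Fintype.card ι) // j ≠ i'}, G (E.symm j.1)) := by
      rw [Submodule.span_iUnion]
      exact iSup_subtype'
    rw [hiSup] at hx2
    have hx2' := hx2
    apply grProj_eq_zero_of_forall gr
    intro e
    by_cases hpos : ∃ d : Fin n → ℕ, natDeg d = e
    · obtain ⟨d, rfl⟩ := hpos
      set v : {i : ι // d ∈ stSet (c i) (Z i)} → M :=
        fun i => vvec (k := k) (c i.1) (m i.1) d with hv
      have h1 : grProj gr (natDeg d) x ∈ Submodule.span k (v '' {α | α.1 = i0}) := by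
        refine grProj_span_le gr ?_ hx1
        intro y hy
        obtain ⟨g, hg, hT⟩ := hkey (natDeg d) i0 y hy
        refine ⟨g, hg, fun hge => ?_⟩
        obtain ⟨d', hd', hnd', hyv⟩ := hT hge
        have hdd : d' = d := by
          funext j
          have := congrFun hnd' j
          simp only [natDeg] at this
          omega
        subst hdd
        exact ⟨⟨i0, hd'⟩, rfl, hyv.symm⟩
      have h2 : grProj gr (natDeg d) x ∈ Submodule.span k (v '' {α | α.1 ≠ i0}) := by
        refine grProj_span_le gr ?_ hx2'
        intro y hy
        simp only [Set.mem_iUnion] at hy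
        obtain ⟨j, hyG⟩ := hy
        obtain ⟨g, hg, hT⟩ := hkey (natDeg d) (E.symm j.1) y hyG
        refine ⟨g, hg, fun hge => ?_⟩
        obtain ⟨d', hd', hnd', hyv⟩ := hT hge
        have hdd : d' = d := by
          funext jj
          have := congrFun hnd' jj
          simp only [natDeg] at this
          omega
        subst hdd
        refine ⟨⟨E.symm j.1, hd'⟩, ?_, hyv.symm⟩
        simp only [Set.mem_setOf_eq]
        intro hcon
        rw [← hgen] at hcon
        exact j.2 (E.symm.injective hcon)
      have hdisj : Disjoint (Submodule.span k (v '' {α | α.1 = i0}))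
          (Submodule.span k (v '' {α | α.1 ≠ i0})) := by
        apply (hli d).disjoint_span_image
        rw [Set.disjoint_left]
        intro α h1 h2
        exact h2 h1
      exact (Submodule.disjoint_def.mp hdisj) _ h1 h2
    · -- no nonnegative representative: all generator degrees differ from e
      have h1 : grProj gr e x ∈ Submodule.span k (∅ : Set M) := by
        refine grProj_span_le gr ?_ hx1
        intro y hy
        obtain ⟨g, hg, hT⟩ := hkey e i0 y hy
        refine ⟨g, hg, fun hge => ?_⟩
        obtain ⟨d', _, hnd', _⟩ := hT hge
        exact absurd ⟨d', hnd'⟩ hpos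
      rw [Submodule.span_empty] at h1
      simpa using h1
  -- total
  · apply le_antisymm le_top
    rw [← gr.total]
    apply iSup_le
    intro e
    by_cases hpos : ∀ j, 0 ≤ e j
    · set d : Fin n → ℕ := fun j => (e j).toNat with hd
      have hnd : natDeg d = e := by
        funext j; simp [natDeg, hd, Int.toNat_of_nonneg (hpos j)]
      rw [← hnd, hspan d, Submodule.span_le]
      rintro y ⟨i, hdS, rfl⟩
      have : vvec (k := k) (c i) (m i) d ∈ stanleySub (m i) (Z i) :=
        Submodule.subset_span (hvG i d hdS)
      have hle : stanleySub (m i) (Z i) ≤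
          (⨆ i', stanleySub (m (E.symm i')) (Z (E.symm i')) : Submodule k M) := by
        have h8 := le_iSup
          (fun i' => (stanleySub (m (E.symm i')) (Z (E.symm i')) : Submodule k M)) (E i)
        simp only [Equiv.symm_apply_apply] at h8
        exact h8
      exact hle this
    · push_neg at hpos
      obtain ⟨j, hj⟩ := hpos
      rw [h.nonneg e ⟨j, hj⟩]
      exact bot_le

/-- From a quasi Stanley decomposition, obtain pointwise basis data via corner
splitting. -/
lemma quasi_pointwise {a : Fin n → ℕ} (D : QSDecomp a gr) :
    ∃ (ι : Type) (_ : Fintype ι) (c : ι → (Fin n → ℕ)) (Z : ι → Finset (Fin n)) (m : ι → M),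
      (∀ α : ι, ∃ i0 : Fin D.s, (Z α).card = suppCardA a (D.b i0)) ∧
      (∀ α, m α ∈ gr.piece (natDeg (c α))) ∧
      (∀ d : Fin n → ℕ, LinearIndependent k
        (fun α : {α : ι // d ∈ stSet (c α) (Z α)} => vvec (k := k) (c α.1) (m α.1) d)) ∧
      (∀ d : Fin n → ℕ, gr.piece (natDeg d) =
        Submodule.span k {y | ∃ α, d ∈ stSet (c α) (Z α) ∧ y = vvec (k := k) (c α) (m α) d}) := by
  classical
  set ZZ : Fin D.s → Finset (Fin n) := fun i => Finset.univ.filter (fun j => a j ≤ D.b i j)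
    with hZZ
  set Cor : Fin D.s → Set (Fin n → ℕ) := fun i =>
    {c' | (∀ j, D.c i j ≤ c' j ∧ c' j ≤ D.b i j) ∧ ∀ j ∈ ZZ i, c' j = D.c i j} with hCor
  haveI hfin : ∀ i, Finite (Cor i) := by
    intro i
    apply Finite.of_injective (fun c' : Cor i =>
      (fun j => (⟨c'.1 j, Nat.lt_succ_of_le (c'.2.1 j).2⟩ : Fin (D.b i j + 1))))
    intro x y hxy
    apply Subtype.ext
    funext j
    exact congrArg Fin.val (congrFun hxy j)
  set ι := (α : Fin D.s) × (Cor α) with hι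
  haveI : Finite ι := inferInstance
  haveI hFT : Fintype ι := Fintype.ofFinite ι
  have hCI : ∀ (i : Fin D.s) (c' : Cor i), (c' : Fin n → ℕ) ∈ intervalSet a (D.c i) (D.b i) :=
    fun i c' => ⟨fun j => (c'.2.1 j).1, fun j hba => (c'.2.1 j).2⟩
  have hmemS : ∀ (i : Fin D.s) (c' : Cor i) (d : Fin n → ℕ),
      d ∈ stSet (c' : Fin n → ℕ) (ZZ i) → d ∈ intervalSet a (D.c i) (D.b i) := by
    intro i c' d hd
    refine ⟨fun j => le_trans (c'.2.1 j).1 (hd.1 j), fun j hba => ?_⟩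
    have hjZ : j ∉ ZZ i := by
      simp only [hZZ, Finset.mem_filter, Finset.mem_univ, true_and]
      omega
    have h1 := hd.2 j hjZ
    have h2 := (c'.2.1 j).2
    omega
  have hvec : ∀ (i : Fin D.s) (c' : Cor i) (d : Fin n → ℕ),
      d ∈ stSet (c' : Fin n → ℕ) (ZZ i) →
      vvec (k := k) (c' : Fin n → ℕ) (D.f i (c' : Fin n → ℕ)) d = D.f i d := by
    intro i c' d hd
    have h1 := D.compat i d (hmemS i c' d hd)
    have h2 := D.compat i (c' : Fin n → ℕ) (hCI i c')
    have h3 : vvec (k := k) (c' : Fin n → ℕ) (D.f i (c' : Fin n → ℕ)) d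
        = vvec (k := k) (D.c i) (D.f i (D.c i)) d := by
      rw [show D.f i (c' : Fin n → ℕ)
          = vvec (k := k) (D.c i) (D.f i (D.c i)) (c' : Fin n → ℕ) from h2]
      exact vvec_comp _ (fun j => (c'.2.1 j).1) (fun j => hd.1 j)
    rw [h3]
    exact (show D.f i d = vvec (k := k) (D.c i) (D.f i (D.c i)) d from h1).symm
  have hcorner : ∀ (i : Fin D.s) (d : Fin n → ℕ), d ∈ intervalSet a (D.c i) (D.b i) →
      ∃ c' : Cor i, d ∈ stSet (c' : Fin n → ℕ) (ZZ i) := by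
    intro i d hd
    have hc' : (fun j => if a j ≤ D.b i j then D.c i j else d j) ∈ Cor i := by
      constructor
      · intro j
        by_cases hab : a j ≤ D.b i j
        · simp only [hab, if_true]
          exact ⟨le_refl _, D.cb i j⟩
        · simp only [hab, if_false]
          have hba : D.b i j < a j := by omega
          exact ⟨hd.1 j, hd.2 j hba⟩
      · intro j hj
        simp only [hZZ, Finset.mem_filter, Finset.mem_univ, true_and] at hj
        simp [hj]
    refine ⟨⟨_, hc'⟩, fun j => ?_, fun j hj => ?_⟩
    · show (if a j ≤ D.b i j then D.c i j else d j) ≤ d j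
      by_cases hab : a j ≤ D.b i j
      · rw [if_pos hab]; exact hd.1 j
      · rw [if_neg hab]
    · show d j = (if a j ≤ D.b i j then D.c i j else d j)
      simp only [hZZ, Finset.mem_filter, Finset.mem_univ, true_and] at hj
      rw [if_neg hj]
  have huniq : ∀ (i : Fin D.s) (c' c'' : Cor i) (d : Fin n → ℕ),
      d ∈ stSet (c' : Fin n → ℕ) (ZZ i) → d ∈ stSet (c'' : Fin n → ℕ) (ZZ i) → c' = c'' := by
    intro i c' c'' d h1 h2
    apply Subtype.ext
    funext j
    by_cases hj : j ∈ ZZ i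
    · rw [c'.2.2 j hj, c''.2.2 j hj]
    · rw [← h1.2 j hj, ← h2.2 j hj]
  refine ⟨ι, hFT, fun α => (α.2 : Fin n → ℕ), fun α => ZZ α.1,
    fun α => D.f α.1 (α.2 : Fin n → ℕ), fun α => ⟨α.1, rfl⟩,
    fun α => D.mem α.1 _ (hCI α.1 α.2), ?_, ?_⟩
  · intro d
    show LinearIndependent k
      (fun β : {α : ι // d ∈ stSet ((α.2 : Fin n → ℕ)) (ZZ α.1)} =>
        vvec (k := k) ((β : ι).2 : Fin n → ℕ) (D.f (β : ι).1 ((β : ι).2 : Fin n → ℕ)) d)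
    set g : {α : ι // d ∈ stSet ((α.2 : Fin n → ℕ)) (ZZ α.1)} →
        {i : Fin D.s // d ∈ intervalSet a (D.c i) (D.b i)} :=
      fun β => ⟨(β : ι).1, hmemS (β : ι).1 (β : ι).2 d β.2⟩ with hg
    have ginj : Function.Injective g := by
      intro β β' hgg
      obtain ⟨⟨i1, c1⟩, hb1⟩ := β
      obtain ⟨⟨i2, c2⟩, hb2⟩ := β'
      have hbase : i1 = i2 := congrArg Subtype.val hgg
      subst hbase
      have hcc : c1 = c2 := huniq i1 c1 c2 d hb1 hb2
      subst hcc
      rfl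
    have hli2 := (D.li d).comp g ginj
    have hfam : (fun β : {α : ι // d ∈ stSet ((α.2 : Fin n → ℕ)) (ZZ α.1)} =>
        vvec (k := k) ((β : ι).2 : Fin n → ℕ) (D.f (β : ι).1 ((β : ι).2 : Fin n → ℕ)) d)
        = (fun i : {i : Fin D.s // d ∈ intervalSet a (D.c i) (D.b i)} => D.f (i : Fin D.s) d)
            ∘ g := by
      funext β
      exact hvec (β : ι).1 (β : ι).2 d β.2
    rw [hfam]
    exact hli2
  · intro d
    show gr.piece (natDeg d) = Submodule.span k
      {y : M | ∃ α : ι, d ∈ stSet ((α.2 : Fin n → ℕ)) (ZZ α.1) ∧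
        y = vvec (k := k) (α.2 : Fin n → ℕ) (D.f α.1 (α.2 : Fin n → ℕ)) d}
    have hset : {y : M | ∃ i, d ∈ intervalSet a (D.c i) (D.b i) ∧ y = D.f i d}
        = {y : M | ∃ α : ι, d ∈ stSet ((α.2 : Fin n → ℕ)) (ZZ α.1) ∧
            y = vvec (k := k) (α.2 : Fin n → ℕ) (D.f α.1 (α.2 : Fin n → ℕ)) d} := by
      ext y
      constructor
      · rintro ⟨i, hdI, rfl⟩
        obtain ⟨c', hc'⟩ := hcorner i d hdI
        exact ⟨⟨i, c'⟩, hc', (hvec i c' d hc').symm⟩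
      · rintro ⟨α, hS, rfl⟩
        exact ⟨α.1, hmemS α.1 α.2 d hS, hvec α.1 α.2 d hS⟩
    rw [D.span d, hset]

/-- From pointwise basis data, build a positively `a`-determined quasi Stanley
decomposition by compressing into the box `[0,a]`. -/
lemma pointwise_to_quasi {a : Fin n → ℕ} (h : IsPosDet a gr) {ι : Type} [Fintype ι]
    (c : ι → (Fin n → ℕ)) (Z : ι → Finset (Fin n)) (m : ι → M)
    (hhom : ∀ i, m i ∈ gr.piece (natDeg (c i)))
    (hli : ∀ d : Fin n → ℕ, LinearIndependent k
      (fun i : {i : ι // d ∈ stSet (c i) (Z i)} => vvec (k := k) (c i.1) (m i.1) d))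
    (hspan : ∀ d : Fin n → ℕ, gr.piece (natDeg d) =
      Submodule.span k {y | ∃ i, d ∈ stSet (c i) (Z i) ∧ y = vvec (k := k) (c i) (m i) d}) :
    ∃ D : QSDecomp a gr, ∀ i' : Fin D.s, ∃ i : ι, (Z i).card ≤ suppCardA a (D.b i') := by
  classical
  set P := {i : ι // ∀ j, c i j ≤ a j} with hP
  obtain ⟨E⟩ : Nonempty (P ≃ Fin (Fintype.card P)) := ⟨Fintype.equivFin P⟩
  set bQ : P → (Fin n → ℕ) := fun p => fun j => if j ∈ Z p.1 then a j else c p.1 j with hbQ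
  have hb : ∀ (p : P) (j : Fin n), bQ p j = if j ∈ Z p.1 then a j else c p.1 j :=
    fun p j => rfl
  have hK1 : ∀ (p : P) (d : Fin n → ℕ),
      d ∈ intervalSet a (c p.1) (bQ p) ↔ (fun j => min (d j) (a j)) ∈ stSet (c p.1) (Z p.1) := by
    intro p d
    constructor
    · rintro ⟨h1, h2⟩
      refine ⟨fun j => ?_, fun j hj => ?_⟩
      · show c p.1 j ≤ min (d j) (a j)
        have h3 := h1 j; have h4 := p.2 j; omega
      · show min (d j) (a j) = c p.1 j
        have h4 := p.2 j
        by_cases hc : c p.1 j = a j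
        · have h3 := h1 j; omega
        · have hlt : bQ p j < a j := by rw [hb p j, if_neg hj]; omega
          have h5 := h2 j hlt
          rw [hb p j, if_neg hj] at h5
          have h3 := h1 j; omega
    · rintro ⟨h1, h2⟩
      refine ⟨fun j => ?_, fun j hj => ?_⟩
      · have h3 : c p.1 j ≤ min (d j) (a j) := h1 j
        omega
      · rw [hb p j] at hj ⊢
        by_cases hjZ : j ∈ Z p.1
        · rw [if_pos hjZ] at hj; omega
        · rw [if_neg hjZ] at hj ⊢
          have h5 : min (d j) (a j) = c p.1 j := h2 j hjZ
          have h3 : c p.1 j ≤ min (d j) (a j) := h1 j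
          omega
  have hK0 : ∀ (i : ι) (d : Fin n → ℕ), (fun j => min (d j) (a j)) ∈ stSet (c i) (Z i) →
      ∀ j, c i j ≤ a j := by
    intro i d hS j
    have h3 : c i j ≤ min (d j) (a j) := hS.1 j
    omega
  have hK2 : ∀ (p : P) (d : Fin n → ℕ), d ∈ intervalSet a (c p.1) (bQ p) →
      vvec (k := k) (c p.1) (m p.1) d
        = (monomial (toFs (fun j => d j - min (d j) (a j))) (1:k) : PS k n) •
            vvec (k := k) (c p.1) (m p.1) (fun j => min (d j) (a j)) := by
    intro p d hd
    have hS := (hK1 p d).mp hd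
    have hce : ∀ j, c p.1 j ≤ (fun j => min (d j) (a j)) j := fun j => hS.1 j
    have hed : ∀ j, (fun j => min (d j) (a j)) j ≤ d j := fun j => min_le_left _ _
    exact (vvec_comp (c := c p.1) (e := fun j => min (d j) (a j)) (d := d) (m p.1) hce hed).symm
  refine ⟨⟨Fintype.card P, fun i' => c (E.symm i').1, fun i' => bQ (E.symm i'),
    ?_, ?_, fun i' => vvec (k := k) (c (E.symm i').1) (m (E.symm i').1),
    ?_, ?_, ?_, ?_⟩, ?_⟩
  -- cb
  · intro i' j
    show c (E.symm i').1 j ≤ bQ (E.symm i') j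
    rw [hb]
    by_cases hjZ : j ∈ Z (E.symm i').1
    · rw [if_pos hjZ]; exact (E.symm i').2 j
    · rw [if_neg hjZ]
  -- ba
  · intro i' j
    show bQ (E.symm i') j ≤ a j
    rw [hb]
    by_cases hjZ : j ∈ Z (E.symm i').1
    · rw [if_pos hjZ]
    · rw [if_neg hjZ]; exact (E.symm i').2 j
  -- compat
  · intro i' d hd
    show vvec (k := k) (c (E.symm i').1) (m (E.symm i').1) d
      = (monomial (toFs (fun j => d j - c (E.symm i').1 j)) (1:k) : PS k n) •
          vvec (k := k) (c (E.symm i').1) (m (E.symm i').1) (c (E.symm i').1)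
    rw [vvec_self]
    rfl
  -- mem
  · intro i' d hd
    exact vvec_mem gr (hhom (E.symm i').1) hd.1
  -- li
  · intro d
    show LinearIndependent k
      (fun α : {i' : Fin (Fintype.card P) //
          d ∈ intervalSet a (c (E.symm i').1) (bQ (E.symm i'))} =>
        vvec (k := k) (c (E.symm α.1).1) (m (E.symm α.1).1) d)
    set L : M →ₗ[k] M := smulLM (monomial (toFs (fun j => d j - min (d j) (a j))) (1:k)) with hL
    have hw : ∀ j, 0 < (fun j => d j - min (d j) (a j)) j → a j ≤ min (d j) (a j) := by
      intro j hj
      simp only at hj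
      omega
    obtain ⟨hinj, -⟩ := posdet_iter h (fun j => d j - min (d j) (a j))
      (fun j => min (d j) (a j)) hw
    set g : {i' : Fin (Fintype.card P) //
        d ∈ intervalSet a (c (E.symm i').1) (bQ (E.symm i'))} →
        {i : ι // (fun j => min (d j) (a j)) ∈ stSet (c i) (Z i)} :=
      fun α => ⟨(E.symm α.1).1, (hK1 (E.symm α.1) d).mp α.2⟩ with hg
    have ginj : Function.Injective g := by
      intro α α' hgg
      have hbase := congrArg Subtype.val hgg
      have hbase2 : E.symm α.1 = E.symm α'.1 := Subtype.ext hbase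
      exact Subtype.ext (E.symm.injective hbase2)
    have hrange : Submodule.span k (Set.range
        (fun β : {i : ι // (fun j => min (d j) (a j)) ∈ stSet (c i) (Z i)} =>
          vvec (k := k) (c β.1) (m β.1) (fun j => min (d j) (a j))))
        ≤ gr.piece (natDeg (fun j => min (d j) (a j))) := by
      rw [Submodule.span_le]
      rintro y ⟨β, rfl⟩
      exact vvec_mem gr (hhom β.1) (fun j => β.2.1 j)
    have hdisj : Disjoint (Submodule.span k (Set.range
        (fun β : {i : ι // (fun j => min (d j) (a j)) ∈ stSet (c i) (Z i)} =>
          vvec (k := k) (c β.1) (m β.1) (fun j => min (d j) (a j)))))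
        (LinearMap.ker L) := by
      rw [Submodule.disjoint_def]
      intro x hx1 hx2
      have h5 := LinearMap.mem_ker.mp hx2
      rw [hL, smulLM_apply] at h5
      refine hinj x (hrange hx1) 0 (Submodule.zero_mem _) ?_
      rw [smul_zero]
      exact h5
    have hli3 := ((hli (fun j => min (d j) (a j))).map hdisj).comp g ginj
    have hfam : (fun α : {i' : Fin (Fintype.card P) //
          d ∈ intervalSet a (c (E.symm i').1) (bQ (E.symm i'))} =>
        vvec (k := k) (c (E.symm α.1).1) (m (E.symm α.1).1) d)
        = (L ∘ (fun β : {i : ι // (fun j => min (d j) (a j)) ∈ stSet (c i) (Z i)} =>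
            vvec (k := k) (c β.1) (m β.1) (fun j => min (d j) (a j)))) ∘ g := by
      funext α
      show vvec (k := k) (c (E.symm α.1).1) (m (E.symm α.1).1) d
        = L (vvec (k := k) (c (E.symm α.1).1) (m (E.symm α.1).1) (fun j => min (d j) (a j)))
      rw [hL, smulLM_apply]
      exact hK2 (E.symm α.1) d α.2
    rw [hfam]
    exact hli3
  -- span
  · intro d
    show gr.piece (natDeg d) = Submodule.span k
      {y : M | ∃ i' : Fin (Fintype.card P),
        d ∈ intervalSet a (c (E.symm i').1) (bQ (E.symm i')) ∧
        y = vvec (k := k) (c (E.symm i').1) (m (E.symm i').1) d}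
    set L : M →ₗ[k] M := smulLM (monomial (toFs (fun j => d j - min (d j) (a j))) (1:k)) with hL
    have hw : ∀ j, 0 < (fun j => d j - min (d j) (a j)) j → a j ≤ min (d j) (a j) := by
      intro j hj
      simp only at hj
      omega
    obtain ⟨-, hsurj⟩ := posdet_iter h (fun j => d j - min (d j) (a j))
      (fun j => min (d j) (a j)) hw
    have hdeg : natDeg (fun j => (fun j => min (d j) (a j)) j + (fun j => d j - min (d j) (a j)) j)
        = natDeg d := by
      funext j
      simp only [natDeg]
      omega
    have hmap : Submodule.map L (gr.piece (natDeg (fun j => min (d j) (a j))))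
        = gr.piece (natDeg d) := by
      apply le_antisymm
      · rintro y ⟨x, hx, rfl⟩
        have h6 := mem_piece_mono_smul gr (fun j => d j - min (d j) (a j)) hx
        rw [hL]
        show (monomial (toFs (fun j => d j - min (d j) (a j))) (1:k) : PS k n) • x
          ∈ gr.piece (natDeg d)
        convert h6 using 2
        funext j
        simp only [natDeg]
        omega
      · intro y hy
        have hy2 : y ∈ gr.piece (natDeg (fun j =>
            (fun j => min (d j) (a j)) j + (fun j => d j - min (d j) (a j)) j)) := by
          rw [hdeg]; exact hy
        obtain ⟨x, hx, hxy⟩ := hsurj y hy2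
        exact ⟨x, hx, by rw [hL, smulLM_apply]; exact hxy⟩
    rw [← hmap, hspan (fun j => min (d j) (a j)), Submodule.map_span]
    congr 1
    ext y
    constructor
    · rintro ⟨x, ⟨i, hS, rfl⟩, rfl⟩
      have hPi : ∀ j, c i j ≤ a j := hK0 i d hS
      refine ⟨E ⟨i, hPi⟩, ?_, ?_⟩
      · rw [Equiv.symm_apply_apply]
        exact (hK1 ⟨i, hPi⟩ d).mpr hS
      · rw [Equiv.symm_apply_apply, hL, smulLM_apply]
        exact (hK2 ⟨i, hPi⟩ d ((hK1 ⟨i, hPi⟩ d).mpr hS)).symm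
    · rintro ⟨i', hdI, rfl⟩
      refine ⟨vvec (k := k) (c (E.symm i').1) (m (E.symm i').1) (fun j => min (d j) (a j)),
        ⟨(E.symm i').1, (hK1 (E.symm i') d).mp hdI, rfl⟩, ?_⟩
      rw [hL, smulLM_apply]
      exact (hK2 (E.symm i') d hdI).symm
  -- cardinality bound
  · intro i'
    refine ⟨(E.symm i').1, ?_⟩
    show (Z (E.symm i').1).card ≤ (Finset.univ.filter (fun j => a j ≤ bQ (E.symm i') j)).card
    apply Finset.card_le_card
    intro j hj
    refine Finset.mem_filter.mpr ⟨Finset.mem_univ j, ?_⟩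
    rw [hb, if_pos hj]

end Aux
theorem stmt6 (k : Type) [Field k] (n : ℕ) (M : Type)
    [AddCommGroup M] [Module (PS k n) M] [Module k M] [IsScalarTower k (PS k n) M] [Module.Finite (PS k n) M]
    (a : Fin n → ℕ) (gr : MGrading k n M) (h : IsPosDet a gr) :
    sdepth gr = sSup {t | ∃ D : QSDecomp a gr, ∀ i, t ≤ suppCardA a (D.b i)} := by
  have hAB : {t : ℕ | ∃ D : StanleyDecomp gr, ∀ i, t ≤ (D.Z i).card}
      = {t : ℕ | ∃ D : QSDecomp a gr, ∀ i, t ≤ suppCardA a (D.b i)} := by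
    ext t
    constructor
    · rintro ⟨D, hD⟩
      obtain ⟨c, m, hhom, hli, hspan⟩ := stanley_pointwise gr h D
      obtain ⟨D', hD'⟩ := pointwise_to_quasi gr h c D.Z m hhom hli hspan
      refine ⟨D', fun i' => ?_⟩
      obtain ⟨i, hi⟩ := hD' i'
      exact le_trans (hD i) hi
    · rintro ⟨D, hD⟩
      obtain ⟨ι, hFT, c, Z, m, hcard, hhom, hli, hspan⟩ := quasi_pointwise gr D
      letI := hFT
      obtain ⟨D', hD'⟩ := pointwise_to_stanley gr h c Z m hhom hli hspan
      refine ⟨D', fun i' => ?_⟩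
      obtain ⟨i, hZ⟩ := hD' i'
      obtain ⟨i0, hc0⟩ := hcard i
      rw [hZ, hc0]
      exact hD i0
  unfold sdepth
  rw [hAB]
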